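/- For every k ≥ 1, the poset O_k minimally rainbow forces the antichain A_k. -/

import Mathlib

/-- A (strong/induced) copy of the poset `P` in the poset `Q`: an injective map
reflecting and preserving the order. -/
def IsCopy {P Q : Type*} [PartialOrder P] [PartialOrder Q] (f : P → Q) : Prop :=
  Function.Injective f ∧ ∀ p p' : P, f p ≤ f p' ↔ p ≤ p'

/-- A proper coloring of a poset: distinct comparable elements get distinct colors. -/
def ProperColoring {Q : Type*} [PartialOrder Q] (c : Q → ℕ) : Prop :=
  ∀ q q' : Q, q ≠ q' → (q ≤ q' ∨ q' ≤ q) → c q ≠ c q'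

/-- `Q` rainbow forces `P`: every proper coloring of `Q` admits a rainbow copy of `P`. -/
def RainbowForces (Q : Type*) [PartialOrder Q] (P : Type*) [PartialOrder P] : Prop :=
  ∀ c : Q → ℕ, ProperColoring c → ∃ f : P → Q, IsCopy f ∧ Function.Injective (c ∘ f)

/-- `Q` minimally rainbow forces `P`: `Q` rainbow forces `P` but no one-element-deleted
induced subposet of `Q` does. -/
def MinRainbowForces (Q : Type*) [PartialOrder Q] (P : Type*) [PartialOrder P] : Prop :=
  RainbowForces Q P ∧ ∀ q : Q, ¬RainbowForces {x : Q // x ≠ q} P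

/-- The antichain poset `A_k` on `k` elements: `Fin k` ordered by equality. -/
def AC (k : ℕ) := Fin k

instance (k : ℕ) : PartialOrder (AC k) where
  le x y := x = y
  le_refl _ := rfl
  le_trans _ _ _ h h' := Eq.trans h h'
  le_antisymm _ _ h _ := h

instance (k : ℕ) : Fintype (AC k) := Fin.fintype k

/-- `O_k`, the disjoint union of chains `C_1 + C_2 + ⋯ + C_k`: pairs `(i, a)` with
`i : Fin k` and `a : Fin (i+1)`, where `(i, a) ≤ (j, b)` iff `i = j` and `a ≤ b`
(the disjoint-sum order on the sigma type). -/
abbrev OPoset (k : ℕ) := Σ i : Fin k, Fin (i.1 + 1)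

/-! ### Auxiliary lemmas -/

theorem AC_le_iff {k : ℕ} (p p' : AC k) : p ≤ p' ↔ p = p' := Iff.rfl

/-- View an element of the antichain as an element of `Fin k`. -/
def ACtoFin {k : ℕ} (p : AC k) : Fin k := p

theorem ACtoFin_inj {k : ℕ} {p p' : AC k} (h : ACtoFin p = ACtoFin p') : p = p' := h

theorem OP_le_iff {k : ℕ} (x y : OPoset k) : x ≤ y ↔ x.1 = y.1 ∧ x.2.1 ≤ y.2.1 := by
  obtain ⟨xi, xa⟩ := x; obtain ⟨yi, ya⟩ := y
  rw [Sigma.le_def]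
  constructor
  · rintro ⟨h, h2⟩; dsimp at h; subst h; exact ⟨rfl, h2⟩
  · rintro ⟨h, h2⟩; dsimp at h; subst h; exact ⟨rfl, h2⟩

theorem OP_ext_iff {k : ℕ} (x y : OPoset k) : x = y ↔ x.1 = y.1 ∧ x.2.1 = y.2.1 := by
  obtain ⟨xi, xa⟩ := x; obtain ⟨yi, ya⟩ := y
  constructor
  · rintro h
    obtain ⟨h1, h2⟩ := Sigma.mk.inj_iff.1 h
    subst h1
    exact ⟨rfl, congrArg Fin.val (eq_of_heq h2)⟩
  · rintro ⟨h, h2⟩; dsimp at h h2; subst h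
    exact congrArg _ (Fin.ext h2)

/-- Greedy selection of one element from each chain avoiding previously used colors. -/
theorem exists_pick (k : ℕ) (c : OPoset k → ℕ) (hc : ProperColoring c) :
    ∀ n, n ≤ k → ∃ x : (i : Fin k) → Fin (i.1 + 1),
      ∀ i j : Fin k, i < j → j.1 < n → c ⟨i, x i⟩ ≠ c ⟨j, x j⟩ := by
  intro n
  induction n with
  | zero => exact fun _ => ⟨fun i => ⟨0, Nat.succ_pos _⟩, fun i j _ h => absurd h (Nat.not_lt_zero _)⟩
  | succ n ih =>
    intro hn
    obtain ⟨x, hx⟩ := ih (Nat.le_of_succ_le hn)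
    set m : Fin k := ⟨n, hn⟩ with hm
    -- colors used on chains before m
    set T : Finset ℕ := (Finset.univ.filter (fun i : Fin k => i < m)).image
      (fun i => c ⟨i, x i⟩) with hT
    have hTcard : T.card ≤ n := by
      calc T.card ≤ (Finset.univ.filter (fun i : Fin k => i < m)).card :=
            Finset.card_image_le
        _ ≤ (Finset.univ.filter (fun i : Fin k => i < m)).card := le_rfl
        _ ≤ n := by
            have : Finset.univ.filter (fun i : Fin k => i < m) ⊆
                (Finset.Iio m) := by
              intro i hi
              simp only [Finset.mem_filter, Finset.mem_univ, true_and] at hi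
              simpa using hi
            calc _ ≤ (Finset.Iio m).card := Finset.card_le_card this
              _ = n := by simp [hm]
    -- the colors on chain m are pairwise distinct, hence n+1 of them
    have hinj : Function.Injective (fun b : Fin (n + 1) => c ⟨m, b⟩) := by
      intro b b' h
      by_contra hne
      refine hc ⟨m, b⟩ ⟨m, b'⟩ ?_ ?_ h
      · intro hcon
        exact hne (Fin.ext ((OP_ext_iff _ _).1 hcon).2)
      · rcases Nat.le_total b.1 b'.1 with h' | h'
        · exact Or.inl ((OP_le_iff _ _).2 ⟨rfl, h'⟩)
        · exact Or.inr ((OP_le_iff _ _).2 ⟨rfl, h'⟩)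
    have hU : ((Finset.univ : Finset (Fin (n + 1))).image
        (fun b : Fin (n + 1) => c ⟨m, b⟩)).card = n + 1 := by
      rw [Finset.card_image_of_injective _ hinj]; simp
    have : ¬ ((Finset.univ : Finset (Fin (n + 1))).image
        (fun b : Fin (n + 1) => c ⟨m, b⟩)) ⊆ T := by
      intro hsub
      have := Finset.card_le_card hsub
      omega
    obtain ⟨col0, hcol0, hcol0T⟩ := Finset.not_subset.1 this
    obtain ⟨b, _, hb⟩ := Finset.mem_image.1 hcol0
    refine ⟨Function.update x m b, ?_⟩
    intro i j hij hj
    have him : i ≠ m := by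
      intro h
      have h1 : i.1 = n := by rw [h]
      have h2 : i.1 < j.1 := hij
      omega
    rw [Function.update_of_ne him]
    rcases Nat.lt_or_ge j.1 n with hjn | hjn
    · have hjm : j ≠ m := by
        intro h; subst h; simp [hm] at hjn
      rw [Function.update_of_ne hjm]
      exact hx i j hij hjn
    · have hjm : j = m := Fin.ext (by simp [hm]; omega)
      subst hjm
      rw [Function.update_self]
      intro hcon
      apply hcol0T
      rw [← hb, ← hcon] at *
      exact Finset.mem_image.2 ⟨i, by simpa using hij, rfl⟩

/-- The positive part: `O_k` rainbow forces `A_k`. -/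
theorem OP_forces (k : ℕ) : RainbowForces (OPoset k) (AC k) := by
  intro c hc
  obtain ⟨x, hx⟩ := exists_pick k c hc k le_rfl
  refine ⟨fun p => ⟨ACtoFin p, x (ACtoFin p)⟩, ⟨?_, ?_⟩, ?_⟩
  · intro p p' h
    exact ACtoFin_inj (((OP_ext_iff _ _).1 h).1)
  · intro p p'
    rw [OP_le_iff, AC_le_iff]
    constructor
    · rintro ⟨h, _⟩
      exact ACtoFin_inj h
    · rintro rfl; exact ⟨rfl, le_rfl⟩
  · intro p p' h
    simp only [Function.comp] at h
    by_contra hne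
    have hne' : ACtoFin p ≠ ACtoFin p' := fun h' => hne (ACtoFin_inj h')
    rcases lt_or_gt_of_ne hne' with hlt | hlt
    · exact hx (ACtoFin p) (ACtoFin p') hlt (ACtoFin p').isLt h
    · exact hx (ACtoFin p') (ACtoFin p) hlt (ACtoFin p).isLt h.symm

/-- For every `k ≥ 1`, the poset `O_k` minimally rainbow forces the
antichain `A_k`. -/
theorem statement10 (k : ℕ) (hk : 1 ≤ k) :
    MinRainbowForces (OPoset k) (AC k) := by
  constructor
  · exact OP_forces k
  · intro q hRF
    -- the bad coloring: rank within the (deleted) chain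
    set i : Fin k := q.1 with hi
    set col : {x : OPoset k // x ≠ q} → ℕ := fun z =>
      if z.val.1.1 = i.1 ∧ q.2.1 < z.val.2.1 then z.val.2.1 - 1 else z.val.2.1 with hcol
    have hne2 : ∀ z : {x : OPoset k // x ≠ q},
        z.val.1.1 = i.1 → z.val.2.1 ≠ q.2.1 := by
      intro z h1 h2
      exact z.2 ((OP_ext_iff _ _).2 ⟨Fin.ext h1, h2⟩)
    have hproper : ProperColoring col := by
      intro z z' hne hcmp
      have hval : z.val ≤ z'.val ∨ z'.val ≤ z.val := hcmp
      have h1 : z.val.1 = z'.val.1 := by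
        rcases hval with h | h
        · exact ((OP_le_iff _ _).1 h).1
        · exact (((OP_le_iff _ _).1 h).1).symm
      have h1' : z.val.1.1 = z'.val.1.1 := congrArg Fin.val h1
      have hvne : z.val.2.1 ≠ z'.val.2.1 := by
        intro h2
        exact hne (Subtype.ext ((OP_ext_iff _ _).2 ⟨h1, h2⟩))
      have hb : z.val.2.1 ≤ z.val.1.1 := Nat.lt_succ_iff.1 z.val.2.isLt
      have hb' : z'.val.2.1 ≤ z'.val.1.1 := Nat.lt_succ_iff.1 z'.val.2.isLt
      have ha : q.2.1 ≤ i.1 := Nat.lt_succ_iff.1 q.2.isLt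
      have hz := hne2 z
      have hz' := hne2 z'
      simp only [hcol]
      split_ifs with hc1 hc2 hc2 <;> omega
    obtain ⟨f, ⟨finj, ford⟩, hrain⟩ := hRF col hproper
    -- the first-coordinate map is injective, hence bijective
    set g : AC k → Fin k := fun p => (f p).val.1 with hg
    have ginj : Function.Injective g := by
      intro p p' h
      have hcmp : (f p).val ≤ (f p').val ∨ (f p').val ≤ (f p).val := by
        rcases Nat.le_total (f p).val.2.1 (f p').val.2.1 with h' | h'
        · exact Or.inl ((OP_le_iff _ _).2 ⟨h, h'⟩)
        · exact Or.inr ((OP_le_iff _ _).2 ⟨h.symm, h'⟩)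
      rcases hcmp with h' | h'
      · exact (ford p p').1 h'
      · exact ((ford p' p).1 h').symm
    have hcard : Fintype.card (AC k) = Fintype.card (Fin k) := by
      simp [AC]
    have gbij : Function.Bijective g :=
      (Fintype.bijective_iff_injective_and_card g).2 ⟨ginj, hcard⟩
    set e : AC k ≃ Fin k := Equiv.ofBijective g gbij with he
    -- key: elements in chains with index ≤ i get colors < i
    have key : ∀ p : AC k, (g p).1 ≤ i.1 → col (f p) < i.1 := by
      intro p hp
      have hb : (f p).val.2.1 ≤ (f p).val.1.1 := Nat.lt_succ_iff.1 (f p).val.2.isLt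
      have ha : q.2.1 ≤ i.1 := Nat.lt_succ_iff.1 q.2.isLt
      have hz := hne2 (f p)
      have hgp : (f p).val.1.1 = (g p).1 := rfl
      simp only [hcol]
      split_ifs with hc <;> omega
    -- pigeonhole: the i+1 chains with index ≤ i give i+1 distinct colors < i
    have hF : ∀ t : Fin (i.1 + 1), (g (e.symm ⟨t.1,
        lt_of_le_of_lt (Nat.lt_succ_iff.1 t.isLt) i.isLt⟩)).1 ≤ i.1 := by
      intro t
      have : g (e.symm ⟨t.1, _⟩) = e (e.symm ⟨t.1,
          lt_of_le_of_lt (Nat.lt_succ_iff.1 t.isLt) i.isLt⟩) := rfl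
      rw [this, Equiv.apply_symm_apply]
      exact Nat.lt_succ_iff.1 t.isLt
    set F : Fin (i.1 + 1) → Fin i.1 := fun t =>
      ⟨col (f (e.symm ⟨t.1, lt_of_le_of_lt (Nat.lt_succ_iff.1 t.isLt) i.isLt⟩)),
        key _ (hF t)⟩ with hFdef
    have Finj : Function.Injective F := by
      intro t t' h
      have h2 : col (f (e.symm ⟨t.1, _⟩)) = col (f (e.symm ⟨t'.1, _⟩)) :=
        congrArg Fin.val h
      have h3 := hrain h2
      have h4 := congrArg e h3
      rw [Equiv.apply_symm_apply, Equiv.apply_symm_apply] at h4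
      have h5 : t.1 = t'.1 := by injection h4
      exact Fin.ext h5
    have := Fintype.card_le_of_injective F Finj
    simp at this
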